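/- Each group T(α)_i (the pushout of C(im α) ← Z_p^h →(×p^i) Z_p^h, with α the left map) is a finite group, and there is a short exact sequence 0 → C(im α) → T(α)_i → (Z/p^i)^h → 0. -/

import Mathlib

open scoped Classical

namespace TwistedChar

variable (p : ℕ) [Fact p.Prime]

/-- The inclusion `ℤ_p^h → ℚ_p^h`. -/
noncomputable def incl (h : ℕ) : (Fin h → ℤ_[p]) →+ (Fin h → ℚ_[p]) :=
  AddMonoidHom.mk' (fun t j => (t j : ℚ_[p])) (by
    intro a b; funext j; push_cast; simp)

/-- `ℤ_p` as an additive subgroup of `ℚ_p`. -/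
noncomputable def zSub : AddSubgroup ℚ_[p] :=
  (PadicInt.Coe.ringHom (p := p)).toAddMonoidHom.range

/-- The quotient group `ℚ_p/ℤ_p`. -/
noncomputable abbrev QZ := ℚ_[p] ⧸ zSub p

/-- The quotient map `ℚ_p^h → (ℚ_p/ℤ_p)^h`. -/
noncomputable def qmap (h : ℕ) : (Fin h → ℚ_[p]) →+ (Fin h → QZ p) :=
  AddMonoidHom.mk' (fun t j => QuotientAddGroup.mk (t j)) (by intro a b; funext j; rfl)

lemma qmap_incl (h : ℕ) (i : Fin h → ℤ_[p]) : qmap p h (incl p h i) = 0 := by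
  funext j
  show QuotientAddGroup.mk _ = (0 : QZ p)
  rw [QuotientAddGroup.eq_zero_iff]
  exact ⟨i j, rfl⟩

variable {h : ℕ} {G : Type*} [Group G]

/-- The centralizer `C(im α)` of the image of `α`. -/
def Cent {p : ℕ} [Fact p.Prime] {h : ℕ} {G : Type*} [Group G] (α : Multiplicative (Fin h → ℤ_[p]) →* G) : Subgroup G :=
  Subgroup.centralizer (Set.range α)

lemma alpha_mem_cent {p : ℕ} [Fact p.Prime] {h : ℕ} {G : Type*} [Group G] (α : Multiplicative (Fin h → ℤ_[p]) →* G)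
    (i : Multiplicative (Fin h → ℤ_[p])) : α i ∈ Cent α := by
  rw [Cent, Subgroup.mem_centralizer_iff]
  rintro g ⟨j, rfl⟩
  rw [← map_mul, ← map_mul, mul_comm]

/-- The map `ℤ_p^h → C(im α) × ℚ_p^h` whose (normal) image one kills to form the
pushout `T(α) = C(im α) ⊕_{ℤ_p^h} ℚ_p^h`. -/
noncomputable def nu (α : Multiplicative (Fin h → ℤ_[p]) →* G) :
    Multiplicative (Fin h → ℤ_[p]) →* (Cent α × Multiplicative (Fin h → ℚ_[p])) :=
  MonoidHom.mk' (fun i =>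
    ((⟨α i, alpha_mem_cent α i⟩ : Cent α)⁻¹, Multiplicative.ofAdd (incl p h i.toAdd)))
    (by
      intro a b
      rw [Prod.mk_mul_mk]
      refine Prod.ext ?_ ?_
      · dsimp only
        rw [← mul_inv_rev]
        congr 1
        ext
        show α (a * b) = α b * α a
        rw [← map_mul, mul_comm a b]
      · dsimp only
        show Multiplicative.ofAdd (incl p h (Multiplicative.toAdd (a * b))) = _
        rw [← ofAdd_add, ← map_add]
        rfl)

lemma nu_range_central (α : Multiplicative (Fin h → ℤ_[p]) →* G)
    (x : (Cent α × Multiplicative (Fin h → ℚ_[p]))) (hx : x ∈ (nu p α).range)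
    (y : (Cent α × Multiplicative (Fin h → ℚ_[p]))) : x * y = y * x := by
  obtain ⟨i, rfl⟩ := hx
  refine Prod.ext ?_ (mul_comm _ _)
  show _ = _
  ext
  show ((α i)⁻¹ * (y.1 : G)) = (y.1 : G) * (α i)⁻¹
  have hc : Commute (α i) (y.1 : G) := Subgroup.mem_centralizer_iff.mp y.1.2 (α i) ⟨i, rfl⟩
  exact hc.inv_left

instance nu_range_normal (α : Multiplicative (Fin h → ℤ_[p]) →* G) :
    ((nu p α).range).Normal := by
  constructor
  intro n hn g
  rw [← nu_range_central p α n hn g, mul_assoc, mul_inv_cancel, mul_one]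
  exact hn

/-- The pushout group `T(α) = C(im α) ⊕_{ℤ_p^h} ℚ_p^h`. -/
noncomputable def TG (α : Multiplicative (Fin h → ℤ_[p]) →* G) : Type _ :=
  (Cent α × Multiplicative (Fin h → ℚ_[p])) ⧸ (nu p α).range

noncomputable instance (α : Multiplicative (Fin h → ℤ_[p]) →* G) : Group (TG p α) :=
  QuotientGroup.Quotient.group _

/-- The canonical surjection onto `T(α)`. -/
noncomputable def mkG (α : Multiplicative (Fin h → ℤ_[p]) →* G) :
    (Cent α × Multiplicative (Fin h → ℚ_[p])) →* TG p α :=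
  QuotientGroup.mk' _

/-- The quotient map `T(α) → (ℚ_p/ℤ_p)^h`, `[g, t] ↦ t mod ℤ_p^h`. -/
noncomputable def psi (α : Multiplicative (Fin h → ℤ_[p]) →* G) :
    TG p α →* Multiplicative (Fin h → QZ p) :=
  QuotientGroup.lift _
    (MonoidHom.mk' (fun x => Multiplicative.ofAdd (qmap p h x.2.toAdd))
      (by intro a b; rw [← ofAdd_add, ← map_add]; rfl))
    (by
      rintro x ⟨i, rfl⟩
      show Multiplicative.ofAdd (qmap p h (incl p h i.toAdd)) = 1
      rw [qmap_incl]
      rfl)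

/-- The inclusion `C(im α) → T(α)`, `g ↦ [g, 0]`. -/
noncomputable def iota (α : Multiplicative (Fin h → ℤ_[p]) →* G) : Cent α →* TG p α :=
  (mkG p α).comp (MonoidHom.inl _ _)


/-- The map `ℤ_p^h → C(im α) × ℤ_p^h`, `j ↦ ((α j)⁻¹, p^i · j)`, whose (normal) image one
kills to form the finite-level pushout `T(α)_i = C(im α) ⊕_{ℤ_p^h} (1/pⁱ)ℤ_p^h`. -/
noncomputable def nui (i : ℕ) (α : Multiplicative (Fin h → ℤ_[p]) →* G) :
    Multiplicative (Fin h → ℤ_[p]) →* (Cent α × Multiplicative (Fin h → ℤ_[p])) :=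
  MonoidHom.mk' (fun j =>
    ((⟨α j, alpha_mem_cent α j⟩ : Cent α)⁻¹,
      Multiplicative.ofAdd ((p : ℤ_[p]) ^ i • Multiplicative.toAdd j)))
    (by
      intro a b
      rw [Prod.mk_mul_mk]
      refine Prod.ext ?_ ?_
      · dsimp only
        rw [← mul_inv_rev]
        congr 1
        ext
        show α (a * b) = α b * α a
        rw [← map_mul, mul_comm a b]
      · dsimp only
        show Multiplicative.ofAdd ((p : ℤ_[p]) ^ i • Multiplicative.toAdd (a * b)) = _
        rw [← ofAdd_add, ← smul_add]
        rfl)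

lemma nui_range_central (i : ℕ) (α : Multiplicative (Fin h → ℤ_[p]) →* G)
    (x : (Cent α × Multiplicative (Fin h → ℤ_[p]))) (hx : x ∈ (nui p i α).range)
    (y : (Cent α × Multiplicative (Fin h → ℤ_[p]))) : x * y = y * x := by
  obtain ⟨j, rfl⟩ := hx
  refine Prod.ext ?_ (mul_comm _ _)
  show _ = _
  ext
  show ((α j)⁻¹ * (y.1 : G)) = (y.1 : G) * (α j)⁻¹
  have hc : Commute (α j) (y.1 : G) := Subgroup.mem_centralizer_iff.mp y.1.2 (α j) ⟨j, rfl⟩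
  exact hc.inv_left

instance nui_range_normal (i : ℕ) (α : Multiplicative (Fin h → ℤ_[p]) →* G) :
    ((nui p i α).range).Normal := by
  constructor
  intro n hn g
  rw [← nui_range_central p i α n hn g, mul_assoc, mul_inv_cancel, mul_one]
  exact hn

/-- The finite-level pushout `T(α)_i = C(im α) ⊕_{ℤ_p^h} ℤ_p^h` along `α` and
multiplication by `pⁱ`. -/
noncomputable def TGi (i : ℕ) (α : Multiplicative (Fin h → ℤ_[p]) →* G) : Type _ :=
  (Cent α × Multiplicative (Fin h → ℤ_[p])) ⧸ (nui p i α).range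

noncomputable instance (i : ℕ) (α : Multiplicative (Fin h → ℤ_[p]) →* G) :
    Group (TGi p i α) :=
  QuotientGroup.Quotient.group _

/-- The canonical surjection onto `T(α)_i`. -/
noncomputable def mkGi (i : ℕ) (α : Multiplicative (Fin h → ℤ_[p]) →* G) :
    (Cent α × Multiplicative (Fin h → ℤ_[p])) →* TGi p i α :=
  QuotientGroup.mk' _

/-- The inclusion `C(im α) → T(α)_i`, `g ↦ [g, 0]`. -/
noncomputable def iotai (i : ℕ) (α : Multiplicative (Fin h → ℤ_[p]) →* G) :
    Cent α →* TGi p i α :=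
  (mkGi p i α).comp (MonoidHom.inl _ _)

/-- The quotient map `T(α)_i → (ℤ/pⁱ)^h`, `[g, t] ↦ t mod pⁱ`. -/
noncomputable def rhoi (i : ℕ) (α : Multiplicative (Fin h → ℤ_[p]) →* G) :
    TGi p i α →* Multiplicative (Fin h → ZMod (p ^ i)) :=
  QuotientGroup.lift _
    (MonoidHom.mk' (fun x =>
        Multiplicative.ofAdd (fun j => PadicInt.toZModPow i (Multiplicative.toAdd x.2 j)))
      (by
        intro a b
        have hab : (fun j => PadicInt.toZModPow i (Multiplicative.toAdd (a * b).2 j))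
            = fun j => PadicInt.toZModPow i (Multiplicative.toAdd a.2 j)
              + PadicInt.toZModPow i (Multiplicative.toAdd b.2 j) := by
          funext j
          show PadicInt.toZModPow i (Multiplicative.toAdd a.2 j + Multiplicative.toAdd b.2 j) = _
          rw [map_add]
        show Multiplicative.ofAdd _ = _
        rw [hab]
        rfl))
    (by
      rintro x ⟨j, rfl⟩
      show Multiplicative.ofAdd
          (fun m => PadicInt.toZModPow i (((p : ℤ_[p]) ^ i • Multiplicative.toAdd j) m)) = 1
      have : ∀ m, PadicInt.toZModPow i (((p : ℤ_[p]) ^ i • Multiplicative.toAdd j) m) = 0 := by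
        intro m
        show PadicInt.toZModPow i ((p : ℤ_[p]) ^ i * Multiplicative.toAdd j m) = 0
        rw [map_mul, map_pow, map_natCast, ← Nat.cast_pow, ZMod.natCast_self, zero_mul]
      simp only [this]
      rfl)

lemma mkGi_eq_of_nui (i : ℕ) (α : Multiplicative (Fin h → ℤ_[p]) →* G)
    (x : Cent α × Multiplicative (Fin h → ℤ_[p])) (j : Multiplicative (Fin h → ℤ_[p])) :
    mkGi p i α (x * nui p i α j) = mkGi p i α x := by
  rw [map_mul]
  have h1 : mkGi p i α (nui p i α j) = 1 := (QuotientGroup.eq_one_iff _).mpr ⟨j, rfl⟩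
  rw [h1, mul_one]

lemma rhoi_mk (i : ℕ) (α : Multiplicative (Fin h → ℤ_[p]) →* G)
    (x : Cent α × Multiplicative (Fin h → ℤ_[p])) :
    rhoi p i α (mkGi p i α x)
      = Multiplicative.ofAdd (fun j => PadicInt.toZModPow i (Multiplicative.toAdd x.2 j)) :=
  rfl

lemma exists_rep (i : ℕ) (α : Multiplicative (Fin h → ℤ_[p]) →* G)
    (g : Cent α) (t : Multiplicative (Fin h → ℤ_[p])) (s : Fin h → ℤ_[p])
    (r : Fin h → ℤ_[p])
    (hs : ∀ m, Multiplicative.toAdd t m = r m + (p : ℤ_[p]) ^ i * s m) :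
    mkGi p i α (g, t)
      = mkGi p i α (g * ⟨α (Multiplicative.ofAdd s), alpha_mem_cent α _⟩,
          Multiplicative.ofAdd r) := by
  conv_rhs => rw [← mkGi_eq_of_nui p i α _ (Multiplicative.ofAdd s)]
  congr 1
  refine Prod.ext ?_ ?_
  · show g = (g * ⟨α (Multiplicative.ofAdd s), alpha_mem_cent α _⟩) *
      (⟨α (Multiplicative.ofAdd s), alpha_mem_cent α _⟩ : Cent α)⁻¹
    rw [mul_assoc, mul_inv_cancel, mul_one]
  · show t = Multiplicative.ofAdd r *
      Multiplicative.ofAdd ((p : ℤ_[p]) ^ i • Multiplicative.toAdd (Multiplicative.ofAdd s))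
    rw [← ofAdd_add]
    apply Multiplicative.toAdd.injective
    funext m
    simpa using hs m

lemma exists_pow_mul_of_toZModPow_eq_zero {i : ℕ} {x : ℤ_[p]}
    (hx : PadicInt.toZModPow i x = 0) : ∃ s : ℤ_[p], x = (p : ℤ_[p]) ^ i * s := by
  have hmem : x ∈ RingHom.ker (PadicInt.toZModPow (p := p) i) := hx
  rw [PadicInt.ker_toZModPow, Ideal.mem_span_singleton] at hmem
  obtain ⟨s, hs⟩ := hmem
  exact ⟨s, hs⟩

/-- Each finite-level pushout `T(α)_i` is a finite group, and there is a
short exact sequence `0 → C(im α) → T(α)_i → (ℤ/pⁱ)^h → 0`. -/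
theorem finite_level_pushout_finite_and_short_exact [Finite G]
    [TopologicalSpace G] [DiscreteTopology G]
    (α : Multiplicative (Fin h → ℤ_[p]) →* G) (hα : Continuous α) (i : ℕ) :
    Finite (TGi p i α) ∧
    Function.Injective (iotai p i α) ∧
    Function.Surjective (rhoi p i α) ∧
    (iotai p i α).range = (rhoi p i α).ker := by
  haveI : NeZero (p ^ i) := ⟨pow_ne_zero i (Fact.out (p := p.Prime)).ne_zero⟩
  -- injectivity of iotai
  have hinj : Function.Injective (iotai p i α) := by
    rw [injective_iff_map_eq_one]
    intro g hg
    have hg' : ((g, (1 : Multiplicative (Fin h → ℤ_[p]))) :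
        Cent α × Multiplicative (Fin h → ℤ_[p])) ∈ (nui p i α).range :=
      (QuotientGroup.eq_one_iff _).mp hg
    obtain ⟨j, hj⟩ := hg'
    have hsnd : Multiplicative.ofAdd ((p : ℤ_[p]) ^ i • Multiplicative.toAdd j)
        = (1 : Multiplicative (Fin h → ℤ_[p])) := congrArg Prod.snd hj
    have hj0 : j = 1 := by
      apply Multiplicative.toAdd.injective
      funext m
      have := congrFun (Multiplicative.ofAdd.injective hsnd) m
      have hp : ((p : ℤ_[p]) ^ i) * Multiplicative.toAdd j m = 0 := this
      have hpne : ((p : ℤ_[p]) ^ i) ≠ 0 :=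
        pow_ne_zero i (Nat.cast_ne_zero.mpr (Fact.out (p := p.Prime)).ne_zero)
      show Multiplicative.toAdd j m = 0
      exact (mul_eq_zero.mp hp).resolve_left hpne
    have hfst : (⟨α j, alpha_mem_cent α j⟩ : Cent α)⁻¹ = g := congrArg Prod.fst hj
    rw [← hfst, hj0]
    refine Subtype.ext ?_
    show (α (1 : Multiplicative (Fin h → ℤ_[p])))⁻¹ = 1
    rw [map_one, inv_one]
  -- kernel = range
  have hker : (iotai p i α).range = (rhoi p i α).ker := by
    ext x
    constructor
    · rintro ⟨g, rfl⟩
      show rhoi p i α (mkGi p i α (g, 1)) = 1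
      rw [rhoi_mk]
      have : (fun j => PadicInt.toZModPow i
          (Multiplicative.toAdd (1 : Multiplicative (Fin h → ℤ_[p])) j))
          = fun _ => (0 : ZMod (p ^ i)) := by
        funext j
        show PadicInt.toZModPow i (0 : ℤ_[p]) = 0
        rw [map_zero]
      rw [this]
      rfl
    · intro hx
      obtain ⟨⟨g, t⟩, rfl⟩ := QuotientGroup.mk'_surjective _ x
      have hx1 : rhoi p i α (mkGi p i α (g, t)) = 1 := hx
      rw [rhoi_mk] at hx1
      have hzero : ∀ m, PadicInt.toZModPow i (Multiplicative.toAdd t m) = 0 := fun m =>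
        congrFun (Multiplicative.ofAdd.injective hx1) m
      choose s hs using fun m => exists_pow_mul_of_toZModPow_eq_zero p (hzero m)
      refine ⟨g * ⟨α (Multiplicative.ofAdd s), alpha_mem_cent α _⟩, ?_⟩
      show mkGi p i α (g * _, 1) = mkGi p i α (g, t)
      rw [exists_rep p i α g t s 0 (fun m => by simpa using hs m)]
      rfl
  -- surjectivity of rhoi
  have hsurj : Function.Surjective (rhoi p i α) := by
    intro c
    refine ⟨mkGi p i α (1, Multiplicative.ofAdd
      (fun m => ((Multiplicative.toAdd c m).val : ℤ_[p]))), ?_⟩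
    rw [rhoi_mk]
    apply Multiplicative.toAdd.injective
    funext m
    show PadicInt.toZModPow i ((((Multiplicative.toAdd c m).val : ℕ) : ℤ_[p]))
        = Multiplicative.toAdd c m
    rw [map_natCast, ZMod.natCast_val, ZMod.cast_id]
  -- finiteness
  have hfin : Finite (TGi p i α) := by
    have hfs : Function.Surjective
        (fun gc : Cent α × (Fin h → ZMod (p ^ i)) =>
          mkGi p i α (gc.1, Multiplicative.ofAdd (fun m => (((gc.2 m).val : ℕ) : ℤ_[p])))) := by
      intro x
      obtain ⟨⟨g, t⟩, rfl⟩ := QuotientGroup.mk'_surjective _ x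
      set c : Fin h → ZMod (p ^ i) :=
        fun m => PadicInt.toZModPow i (Multiplicative.toAdd t m) with hc
      have hzero : ∀ m, PadicInt.toZModPow i
          (Multiplicative.toAdd t m - (((c m).val : ℕ) : ℤ_[p])) = 0 := by
        intro m
        rw [map_sub, map_natCast, ZMod.natCast_val, ZMod.cast_id, hc, sub_self]
      choose s hs using fun m => exists_pow_mul_of_toZModPow_eq_zero p (hzero m)
      refine ⟨(g * ⟨α (Multiplicative.ofAdd s), alpha_mem_cent α _⟩, c), ?_⟩
      exact (exists_rep p i α g t s (fun m => (((c m).val : ℕ) : ℤ_[p]))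
        (fun m => by linear_combination hs m)).symm
    exact Finite.of_surjective _ hfs
  exact ⟨hfin, hinj, hsurj, hker⟩

end TwistedChar
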